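/- Let P be a digital (t,m,s)-net in prime power base b with N = b^m points. Then for any nonempty u ⊆ {1,…,s} and k ∈ ℕ₀^{|u|}, |A(u, k+1_u) ∩ P^⊥| = 0 if |k| ≤ m−t−|u|; |A(u,k+1_u) ∩ P^⊥| ≤ (b−1)^{|u|+|k|−(m−t)} if m−t−|u| < |k| ≤ m−t; and |A(u,k+1_u) ∩ P^⊥| ≤ (b−1)^{|u|} b^{|k|−(m−t)} if |k| > m−t. -/

import Mathlib

open Finset

noncomputable section

/-- the `i`-th `b`-adic digit of a natural number `k`. -/
def ndigit (b k i : ℕ) : ℕ := k / b ^ i % b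

/-- the `(i+1)`-st `b`-adic digit of a real number `x ∈ [0,1)`
(the unique expansion with infinitely many digits `≠ b-1`). -/
def rdigit (b : ℕ) (x : ℝ) (i : ℕ) : ℕ := (⌊(b : ℝ) ^ (i + 1) * x⌋).toNat % b

/-- the primitive `b`-th root of unity `ω_b = exp(2πi/b)`. -/
def omg (b : ℕ) : ℂ := Complex.exp (2 * Real.pi * Complex.I / b)

/-- embed a digit (element of `Z_b`) into the finite field `F` via the bijection `φ`. -/
def toF {F : Type} [Field F] [Fintype F] (φ : Fin (Fintype.card F) ≃ F) (a : ℕ) : F :=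
  φ ⟨a % Fintype.card F, Nat.mod_lt a Fintype.card_pos⟩

/-- map a field element back to a digit in `Z_b` via `φ⁻¹`. -/
def fromF {F : Type} [Field F] [Fintype F] (φ : Fin (Fintype.card F) ≃ F) (a : F) : ℕ :=
  (φ.symm a : ℕ)

/-- the `k`-th `b`-adic Walsh function, `b = |F|`,
`wal_k(x) = ω_b^{φ⁻¹(φ(κ₀)φ(ξ₁)) + φ⁻¹(φ(κ₁)φ(ξ₂)) + ⋯}`. -/
def wal {F : Type} [Field F] [Fintype F] (φ : Fin (Fintype.card F) ≃ F) (k : ℕ) (x : ℝ) : ℂ :=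
  omg (Fintype.card F) ^
    ∑ i ∈ Finset.range k,
      fromF φ (toF φ (ndigit (Fintype.card F) k i) * toF φ (rdigit (Fintype.card F) x i))

/-- the multivariate `b`-adic Walsh function `wal_k(x) = ∏_j wal_{k_j}(x_j)`. -/
def walv {F : Type} [Field F] [Fintype F] {s : ℕ} (φ : Fin (Fintype.card F) ≃ F)
    (k : Fin s → ℕ) (x : Fin s → ℝ) : ℂ :=
  ∏ j, wal φ (k j) (x j)

/-- the `j`-th coordinate of the `h`-th point of the digital net with generating
matrices `C_1,…,C_s` (with `n` rows, `m` columns, rows of index `≥ n` unused). -/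
def dnet {F : Type} [Field F] [Fintype F] {s m : ℕ} (φ : Fin (Fintype.card F) ≃ F)
    (C : Fin s → ℕ → Fin m → F) (n : ℕ) (h : ℕ) (j : Fin s) : ℝ :=
  ∑ i ∈ Finset.range n,
    (fromF φ (∑ c, C j i c * toF φ (ndigit (Fintype.card F) h (c : ℕ))) : ℝ) /
      (Fintype.card F : ℝ) ^ (i + 1)

/-- membership in the dual net `P^⊥`:
`C_1^⊤ ν_n(k_1) + ⋯ + C_s^⊤ ν_n(k_s) = 0 ∈ F^m`. -/
def inDual {F : Type} [Field F] [Fintype F] {s m : ℕ} (φ : Fin (Fintype.card F) ≃ F)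
    (C : Fin s → ℕ → Fin m → F) (n : ℕ) (k : Fin s → ℕ) : Prop :=
  ∀ c : Fin m,
    ∑ j, ∑ i ∈ Finset.range n, C j i c * toF φ (ndigit (Fintype.card F) (k j) i) = 0

/-- `V(u,k) = {ℓ ∈ ℕ₀^s : ℓ_j < b^{k_j} if j ∈ u, ℓ_j = 0 otherwise}`. -/
def Vset (b : ℕ) {s : ℕ} (u : Finset (Fin s)) (k : Fin s → ℕ) : Finset (Fin s → ℕ) :=
  Fintype.piFinset fun j => Finset.range (if j ∈ u then b ^ k j else 1)

/-- `A(u,l) = {ℓ ∈ ℕ₀^s : b^{l_j-1} ≤ ℓ_j < b^{l_j} if j ∈ u, ℓ_j = 0 otherwise}`. -/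
def Aset (b : ℕ) {s : ℕ} (u : Finset (Fin s)) (l : Fin s → ℕ) : Finset (Fin s → ℕ) :=
  (Vset b u l).filter fun ℓ => ∀ j ∈ u, b ^ (l j - 1) ≤ ℓ j

/-- `k + 1_v`: add one to the components in `v`. -/
def plusOne {s : ℕ} (k : Fin s → ℕ) (v : Finset (Fin s)) : Fin s → ℕ :=
  fun j => if j ∈ v then k j + 1 else k j

/-- the gain coefficient `Γ_{u,k}` of an `N`-element point set in base `b`. -/
def gain {s : ℕ} (b N : ℕ) (x : Fin N → Fin s → ℝ) (u : Finset (Fin s))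
    (k : Fin s → ℕ) : ℝ :=
  (1 / N) * ∑ i, ∑ i', ∏ j ∈ u,
    ((b * (if ⌊(b : ℝ) ^ (k j + 1) * x i j⌋ = ⌊(b : ℝ) ^ (k j + 1) * x i' j⌋ then (1:ℝ) else 0) -
        (if ⌊(b : ℝ) ^ (k j) * x i j⌋ = ⌊(b : ℝ) ^ (k j) * x i' j⌋ then (1:ℝ) else 0)) /
      (b - 1))

/-- `C_{u,k}`: the matrix stacking the first `k_j` rows of `C_j` for `j ∈ u`
(a generating matrix `C_j` having `n` rows). -/
def Cuk {F : Type} [Field F] [Fintype F] {s m : ℕ} (C : Fin s → ℕ → Fin m → F) (n : ℕ)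
    (u : Finset (Fin s)) (k : Fin s → ℕ) :
    Matrix ((j : Fin s) × Fin (min (if j ∈ u then k j else 0) n)) (Fin m) F :=
  fun p c => C p.1 (p.2 : ℕ) c

/-- `C` generates a digital `(t,m,s)`-net in base `b = |F|`:
`C_{u,k}` has full row rank whenever `|k| ≤ m - t`. -/
def IsDigitalTNet {F : Type} [Field F] [Fintype F] {s m : ℕ}
    (C : Fin s → ℕ → Fin m → F) (n : ℕ) (t : ℕ) : Prop :=
  ∀ u : Finset (Fin s), ∀ k : Fin s → ℕ,
    (∑ j ∈ u, k j) + t ≤ m → (Cuk C n u k).rank = ∑ j ∈ u, k j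

/-- the upper bound `B(u,k) = b^{m - rank(C_{u,k})} (b-1)^{rank(C_{u,k}) - rank(C_{u,k+1_u})}`. -/
def Bcoef {F : Type} [Field F] [Fintype F] {s m : ℕ} (C : Fin s → ℕ → Fin m → F) (n : ℕ)
    (u : Finset (Fin s)) (k : Fin s → ℕ) : ℝ :=
  (Fintype.card F : ℝ) ^ ((m : ℤ) - ((Cuk C n u k).rank : ℤ)) *
    ((Fintype.card F : ℝ) - 1) ^
      (((Cuk C n u k).rank : ℤ) - ((Cuk C n u (plusOne k u)).rank : ℤ))

/-- `t*_u = m + 1 - min{|k| : k ∈ ℕ^{|u|}, C_{u,k} not full row rank}`. -/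
def tstar {F : Type} [Field F] [Fintype F] {s m : ℕ} (C : Fin s → ℕ → Fin m → F) (n : ℕ)
    (u : Finset (Fin s)) : ℤ :=
  (m : ℤ) + 1 -
    (sInf {r : ℕ | ∃ k : Fin s → ℕ, (∀ j ∈ u, 1 ≤ k j) ∧
      (Cuk C n u k).rank ≠ ∑ j ∈ u, k j ∧ r = ∑ j ∈ u, k j} : ℕ)

end

section AuxDigits

lemma ndigit_lt {b : ℕ} (hb : 0 < b) (k i : ℕ) : ndigit b k i < b := Nat.mod_lt _ hb

lemma ndigit_zero (b i : ℕ) : ndigit b 0 i = 0 := by simp [ndigit]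

lemma ndigit_eq_zero_of_lt {b k i : ℕ} (h : k < b ^ i) : ndigit b k i = 0 := by
  simp [ndigit, Nat.div_eq_of_lt h]

lemma mod_pow_eq_sum (b a N : ℕ) :
    a % b ^ N = ∑ i ∈ Finset.range N, ndigit b a i * b ^ i := by
  induction N with
  | zero => simp [Nat.mod_one]
  | succ N ih =>
    rw [Finset.sum_range_succ, ← ih, pow_succ, Nat.mod_mul, ndigit]
    ring

lemma eq_of_ndigit_eq {b : ℕ} {a a' : ℕ} (N : ℕ) (ha : a < b ^ N) (ha' : a' < b ^ N)
    (h : ∀ i, ndigit b a i = ndigit b a' i) : a = a' := by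
  have h1 := mod_pow_eq_sum b a N
  have h2 := mod_pow_eq_sum b a' N
  rw [Nat.mod_eq_of_lt ha] at h1
  rw [Nat.mod_eq_of_lt ha'] at h2
  rw [h1, h2]
  exact Finset.sum_congr rfl fun i _ => by rw [h i]

lemma ndigit_div_pow (b a k i : ℕ) : ndigit b (a / b ^ k) i = ndigit b a (k + i) := by
  simp [ndigit, Nat.div_div_eq_div_mul, ← pow_add]

end AuxDigits

section AuxF

variable {F : Type} [Field F] [Fintype F]

lemma toF_zero (φ : Fin (Fintype.card F) ≃ F) (hφ : φ ⟨0, Fintype.card_pos⟩ = 0) :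
    toF φ 0 = 0 := by
  unfold toF
  simp only [Nat.zero_mod]
  exact hφ

lemma toF_inj (φ : Fin (Fintype.card F) ≃ F) {a a' : ℕ}
    (ha : a < Fintype.card F) (ha' : a' < Fintype.card F)
    (h : toF φ a = toF φ a') : a = a' := by
  have h2 := congrArg (fun x => ((φ.symm x : Fin (Fintype.card F)) : ℕ)) h
  simpa [toF, Nat.mod_eq_of_lt ha, Nat.mod_eq_of_lt ha'] using h2

end AuxF

section AuxSum

lemma exists_le_sum {s : ℕ} (u : Finset (Fin s)) (k : Fin s → ℕ) (r : ℕ)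
    (hr : r ≤ ∑ j ∈ u, k j) :
    ∃ k' : Fin s → ℕ, (∀ j, k' j ≤ k j) ∧ ∑ j ∈ u, k' j = r := by
  classical
  induction r with
  | zero => exact ⟨fun _ => 0, fun _ => Nat.zero_le _, by simp⟩
  | succ r ih =>
    obtain ⟨k', hle, hsum⟩ := ih (by omega)
    have hex : ∃ j ∈ u, k' j < k j := by
      by_contra hcon
      push_neg at hcon
      have : ∑ j ∈ u, k j ≤ ∑ j ∈ u, k' j := Finset.sum_le_sum hcon
      omega
    obtain ⟨j0, hj0, hlt⟩ := hex
    refine ⟨Function.update k' j0 (k' j0 + 1), fun j => ?_, ?_⟩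
    · by_cases h : j = j0
      · subst h; simp; omega
      · simp [Function.update, h]; exact hle j
    · rw [Finset.sum_update_of_mem hj0]
      have := Finset.add_sum_erase u k' hj0
      rw [Finset.sdiff_singleton_eq_erase]
      omega

end AuxSum

section KeyLemma

open Finset

lemma dual_digit_eq {F : Type} [Field F] [Fintype F] {s m : ℕ}
    (φ : Fin (Fintype.card F) ≃ F)
    (C : Fin s → ℕ → Fin m → F) (n : ℕ) (hn : m ≤ n) (t : ℕ)
    (hnet : IsDigitalTNet C n t) (u : Finset (Fin s))
    (k' : Fin s → ℕ) (hsum : (∑ j ∈ u, k' j) + t ≤ m)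
    (ℓ ℓ' : Fin s → ℕ) (hd : inDual φ C n ℓ) (hd' : inDual φ C n ℓ')
    (hout : ∀ j, j ∉ u → ℓ j = ℓ' j)
    (hhigh : ∀ j ∈ u, ∀ i, k' j ≤ i →
      ndigit (Fintype.card F) (ℓ j) i = ndigit (Fintype.card F) (ℓ' j) i) :
    ∀ j i, ndigit (Fintype.card F) (ℓ j) i = ndigit (Fintype.card F) (ℓ' j) i := by
  classical
  have hbpos : 0 < Fintype.card F := Fintype.card_pos
  have hkn : ∀ j ∈ u, k' j ≤ n := fun j hj =>
    le_trans (le_trans (Finset.single_le_sum (fun _ _ => Nat.zero_le _) hj) (by omega)) hn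
  set D : Fin s → ℕ → F :=
    fun j i => toF φ (ndigit (Fintype.card F) (ℓ j) i) - toF φ (ndigit (Fintype.card F) (ℓ' j) i) with hD
  have hDout : ∀ j, j ∉ u → ∀ i, D j i = 0 := fun j hj i => by simp [hD, hout j hj]
  have hDhigh : ∀ j ∈ u, ∀ i, k' j ≤ i → D j i = 0 := fun j hj i hi => by
    simp [hD, hhigh j hj i hi]
  have hcard : Fintype.card ((j : Fin s) × Fin (min (if j ∈ u then k' j else 0) n)) =
      ∑ j ∈ u, k' j := by
    rw [Fintype.card_sigma,
      ← Finset.sum_subset (Finset.subset_univ u) (fun j _ hj => by simp [hj])]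
    exact Finset.sum_congr rfl fun j hj => by simp [hj, min_eq_left (hkn j hj)]
  have hli : LinearIndependent F (Cuk C n u k') := by
    apply linearIndependent_iff_card_eq_finrank_span.2
    have h2 : Set.finrank F (Set.range (Cuk C n u k')) = (Cuk C n u k').rank := by
      rw [Set.finrank, ← Matrix.rank_transpose, Matrix.rank_eq_finrank_span_cols,
        Matrix.col_transpose, Matrix.row]
    rw [h2, hnet u k' hsum, hcard]
  have hsum0 : ∑ p : (j : Fin s) × Fin (min (if j ∈ u then k' j else 0) n),
      D p.1 (p.2 : ℕ) • Cuk C n u k' p = 0 := by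
    ext c
    rw [Finset.sum_apply]
    have h0 : ∑ j, ∑ i ∈ Finset.range n, C j i c * D j i = 0 := by
      simp only [hD, mul_sub, Finset.sum_sub_distrib]
      rw [hd c, hd' c, sub_zero]
    have h1 : ∀ j : Fin s, ∑ i ∈ Finset.range n, C j i c * D j i =
        ∑ i ∈ Finset.range (min (if j ∈ u then k' j else 0) n), C j i c * D j i := by
      intro j
      refine (Finset.sum_subset (Finset.range_subset_range.2 (min_le_right _ _)) ?_).symm
      intro i hi hi'
      rw [Finset.mem_range] at hi hi'
      push_neg at hi'
      by_cases hj : j ∈ u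
      · rw [hDhigh j hj i (by rw [if_pos hj] at hi'; omega), mul_zero]
      · rw [hDout j hj i, mul_zero]
    have h2 : ∀ j : Fin s, ∑ i ∈ Finset.range (min (if j ∈ u then k' j else 0) n),
        C j i c * D j i =
        ∑ i : Fin (min (if j ∈ u then k' j else 0) n), C j (i : ℕ) c * D j (i : ℕ) :=
      fun j => (Fin.sum_univ_eq_sum_range _ _).symm
    calc ∑ p : (j : Fin s) × Fin (min (if j ∈ u then k' j else 0) n),
          (D p.1 (p.2 : ℕ) • Cuk C n u k' p) c
        = ∑ j : Fin s, ∑ i : Fin (min (if j ∈ u then k' j else 0) n),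
            C j (i : ℕ) c * D j (i : ℕ) := by
          rw [← Finset.univ_sigma_univ, Finset.sum_sigma]
          exact Finset.sum_congr rfl fun j _ => Finset.sum_congr rfl fun i _ => by
            simp [Cuk, mul_comm]
      _ = ∑ j : Fin s, ∑ i ∈ Finset.range n, C j i c * D j i := by
          exact Finset.sum_congr rfl fun j _ => by rw [h1 j, h2 j]
      _ = 0 := h0
  have hzero := Fintype.linearIndependent_iff.1 hli (fun p => D p.1 (p.2 : ℕ)) hsum0
  intro j i
  by_cases hj : j ∈ u
  · by_cases hi : k' j ≤ i
    · exact hhigh j hj i hi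
    · push_neg at hi
      have hmem : i < min (if j ∈ u then k' j else 0) n := by
        rw [if_pos hj, min_eq_left (hkn j hj)]; exact hi
      have hz := hzero ⟨j, ⟨i, hmem⟩⟩
      have : toF φ (ndigit (Fintype.card F) (ℓ j) i) = toF φ (ndigit (Fintype.card F) (ℓ' j) i) := by
        have hz' : D j i = 0 := hz
        rw [hD] at hz'
        exact sub_eq_zero.1 hz'
      exact toF_inj φ (ndigit_lt hbpos _ _) (ndigit_lt hbpos _ _) this
  · rw [hout j hj]

end KeyLemma

section CountLemma

open Finset

lemma mem_Aset_plusOne {b : ℕ} {s : ℕ} (u : Finset (Fin s)) (k : Fin s → ℕ) (ℓ : Fin s → ℕ) :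
    ℓ ∈ Aset b u (plusOne k u) ↔
      (∀ j ∈ u, b ^ k j ≤ ℓ j ∧ ℓ j < b ^ (k j + 1)) ∧ ∀ j ∉ u, ℓ j = 0 := by
  classical
  rw [Aset, Finset.mem_filter, Vset, Fintype.mem_piFinset]
  simp only [Finset.mem_range]
  constructor
  · rintro ⟨hV, hlow⟩
    refine ⟨fun j hj => ⟨?_, ?_⟩, fun j hj => ?_⟩
    · have := hlow j hj; simpa [plusOne, hj] using this
    · have := hV j; simpa [plusOne, hj] using this
    · have := hV j; simp [hj] at this; omega
  · rintro ⟨h1, h2⟩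
    refine ⟨fun j => ?_, fun j hj => by simpa [plusOne, hj] using (h1 j hj).1⟩
    by_cases hj : j ∈ u
    · simpa [plusOne, hj] using (h1 j hj).2
    · simp [hj, h2 j hj]

lemma count_bound {F : Type} [Field F] [Fintype F] {s m : ℕ}
    (φ : Fin (Fintype.card F) ≃ F)
    (C : Fin s → ℕ → Fin m → F) (n : ℕ) (hn : m ≤ n) (t : ℕ)
    (hnet : IsDigitalTNet C n t) (u : Finset (Fin s))
    (k k' : Fin s → ℕ) (hk' : ∀ j ∈ u, k' j ≤ k j + 1)
    (hsum : (∑ j ∈ u, k' j) + t ≤ m) :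
    Set.ncard {ℓ : Fin s → ℕ |
        ℓ ∈ Aset (Fintype.card F) u (plusOne k u) ∧ inDual φ C n ℓ} ≤
      ∏ j ∈ u, (if k' j ≤ k j then
        (Fintype.card F - 1) * Fintype.card F ^ (k j - k' j) else 1) := by
  classical
  have hb : 1 < Fintype.card F := Fintype.one_lt_card
  set S : Finset (Fin s → ℕ) :=
    (Aset (Fintype.card F) u (plusOne k u)).filter (fun ℓ => inDual φ C n ℓ) with hS
  have hset : {ℓ : Fin s → ℕ |
      ℓ ∈ Aset (Fintype.card F) u (plusOne k u) ∧ inDual φ C n ℓ} = ↑S := by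
    ext ℓ; simp [hS]
  rw [hset, Set.ncard_coe_finset]
  set T : Finset (Fin s → ℕ) := Fintype.piFinset (fun j => if j ∈ u then
      (if k' j ≤ k j then
        Finset.Ico (Fintype.card F ^ (k j - k' j)) (Fintype.card F ^ (k j + 1 - k' j))
      else {0}) else {0}) with hT
  have hmem : ∀ ℓ ∈ S,
      (∀ j ∈ u, Fintype.card F ^ k j ≤ ℓ j ∧ ℓ j < Fintype.card F ^ (k j + 1)) ∧
      ∀ j ∉ u, ℓ j = 0 := by
    intro ℓ hℓ
    rw [hS, Finset.mem_filter] at hℓ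
    exact (mem_Aset_plusOne u k ℓ).1 hℓ.1
  have hdual : ∀ ℓ ∈ S, inDual φ C n ℓ := by
    intro ℓ hℓ; rw [hS, Finset.mem_filter] at hℓ; exact hℓ.2
  have hmapT : ∀ ℓ ∈ S, (fun j => ℓ j / Fintype.card F ^ k' j) ∈ T := by
    intro ℓ hℓ
    obtain ⟨hu', hz⟩ := hmem ℓ hℓ
    rw [hT, Fintype.mem_piFinset]
    intro j
    by_cases hj : j ∈ u
    · rw [if_pos hj]
      obtain ⟨hlow, hup⟩ := hu' j hj
      by_cases hk : k' j ≤ k j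
      · rw [if_pos hk, Finset.mem_Ico]
        constructor
        · rw [Nat.le_div_iff_mul_le (pow_pos (by omega) _), ← pow_add]
          have heq : k j - k' j + k' j = k j := by omega
          rw [heq]; exact hlow
        · rw [Nat.div_lt_iff_lt_mul (pow_pos (by omega) _), ← pow_add]
          have heq : k j + 1 - k' j + k' j = k j + 1 := by omega
          rw [heq]; exact hup
      · rw [if_neg hk, Finset.mem_singleton]
        have hk2 : k' j = k j + 1 := by have := hk' j hj; omega
        rw [hk2]; exact Nat.div_eq_of_lt hup
    · rw [if_neg hj, Finset.mem_singleton, hz j hj, Nat.zero_div]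
  have hinj : Set.InjOn (fun (ℓ : Fin s → ℕ) (j : Fin s) => ℓ j / Fintype.card F ^ k' j) (↑S : Set (Fin s → ℕ)) := by
    intro ℓ hℓ ℓ' hℓ' heq
    obtain ⟨hu1, hz1⟩ := hmem ℓ hℓ
    obtain ⟨hu2, hz2⟩ := hmem ℓ' hℓ'
    have hout : ∀ j, j ∉ u → ℓ j = ℓ' j := fun j hj => by rw [hz1 j hj, hz2 j hj]
    have hhigh : ∀ j ∈ u, ∀ i, k' j ≤ i →
        ndigit (Fintype.card F) (ℓ j) i = ndigit (Fintype.card F) (ℓ' j) i := by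
      intro j hj i hi
      have e1 : ndigit (Fintype.card F) (ℓ j) i =
          ndigit (Fintype.card F) (ℓ j / Fintype.card F ^ k' j) (i - k' j) := by
        rw [ndigit_div_pow]; congr 1; omega
      have e2 : ndigit (Fintype.card F) (ℓ' j) i =
          ndigit (Fintype.card F) (ℓ' j / Fintype.card F ^ k' j) (i - k' j) := by
        rw [ndigit_div_pow]; congr 1; omega
      rw [e1, e2]
      have heq' : ℓ j / Fintype.card F ^ k' j = ℓ' j / Fintype.card F ^ k' j :=
        congrFun heq j
      rw [heq']
    have hdig := dual_digit_eq φ C n hn t hnet u k' hsum ℓ ℓ'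
      (hdual ℓ hℓ) (hdual ℓ' hℓ') hout hhigh
    funext j
    by_cases hj : j ∈ u
    · exact eq_of_ndigit_eq (k j + 1) (hu1 j hj).2 (hu2 j hj).2 (hdig j)
    · exact hout j hj
  refine le_trans (Finset.card_le_card_of_injOn _ hmapT hinj) (le_of_eq ?_)
  rw [hT, Fintype.card_piFinset,
    ← Finset.prod_subset (Finset.subset_univ u) (fun j _ hj => by simp [hj])]
  refine Finset.prod_congr rfl fun j hj => ?_
  rw [if_pos hj]
  by_cases hk : k' j ≤ k j
  · rw [if_pos hk, if_pos hk, Nat.card_Ico]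
    have h1 : k j + 1 - k' j = (k j - k' j) + 1 := by omega
    rw [h1, pow_succ, Nat.sub_mul, one_mul]
    congr 1
    ring
  · rw [if_neg hk, if_neg hk, Finset.card_singleton]

end CountLemma
/-- for a digital `(t,m,s)`-net, `|A(u,k+1_u) ∩ P^⊥| = 0` if
`|k| ≤ m-t-|u|`, `≤ (b-1)^{|u|+|k|-(m-t)}` if `m-t-|u| < |k| ≤ m-t`, and
`≤ (b-1)^{|u|} b^{|k|-(m-t)}` if `|k| > m-t`. -/
theorem stmt11 {F : Type} [Field F] [Fintype F] {s m : ℕ}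
    (φ : Fin (Fintype.card F) ≃ F) (hφ : φ ⟨0, Fintype.card_pos⟩ = 0)
    (C : Fin s → ℕ → Fin m → F) (n : ℕ) (hn : m ≤ n)
    (t : ℕ) (ht : t ≤ m) (hnet : IsDigitalTNet C n t)
    (u : Finset (Fin s)) (hu : u.Nonempty) (k : Fin s → ℕ) :
    ((∑ j ∈ u, k j) + t + u.card ≤ m →
      Set.ncard {ℓ : Fin s → ℕ |
        ℓ ∈ Aset (Fintype.card F) u (plusOne k u) ∧ inDual φ C n ℓ} = 0) ∧
    (m < (∑ j ∈ u, k j) + t + u.card → (∑ j ∈ u, k j) + t ≤ m →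
      Set.ncard {ℓ : Fin s → ℕ |
        ℓ ∈ Aset (Fintype.card F) u (plusOne k u) ∧ inDual φ C n ℓ} ≤
      (Fintype.card F - 1) ^ (u.card + (∑ j ∈ u, k j) + t - m)) ∧
    (m < (∑ j ∈ u, k j) + t →
      Set.ncard {ℓ : Fin s → ℕ |
        ℓ ∈ Aset (Fintype.card F) u (plusOne k u) ∧ inDual φ C n ℓ} ≤
      (Fintype.card F - 1) ^ u.card * Fintype.card F ^ ((∑ j ∈ u, k j) + t - m)) := by
  classical
  have hb : 1 < Fintype.card F := Fintype.one_lt_card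
  refine ⟨?_, ?_, ?_⟩
  · -- part 1: empty
    intro h1
    have hempty : {ℓ : Fin s → ℕ |
        ℓ ∈ Aset (Fintype.card F) u (plusOne k u) ∧ inDual φ C n ℓ} = ∅ := by
      rw [Set.eq_empty_iff_forall_notMem]
      rintro ℓ ⟨hA, hdl⟩
      obtain ⟨hu', hz⟩ := (mem_Aset_plusOne u k ℓ).1 hA
      have hdual0 : inDual φ C n (fun _ => 0) := by
        intro c
        simp [ndigit_zero, toF_zero φ hφ]
      have hsum' : (∑ j ∈ u, plusOne k u j) + t ≤ m := by
        have hps : ∑ j ∈ u, plusOne k u j = (∑ j ∈ u, k j) + u.card := by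
          rw [Finset.sum_congr rfl
              (fun j hj => (by simp [plusOne, hj] : plusOne k u j = k j + 1)),
            Finset.sum_add_distrib, Finset.sum_const, smul_eq_mul, mul_one]
        omega
      have hhigh : ∀ j ∈ u, ∀ i, plusOne k u j ≤ i →
          ndigit (Fintype.card F) (ℓ j) i = ndigit (Fintype.card F) ((fun _ => 0) j) i := by
        intro j hj i hi
        simp only [plusOne, if_pos hj] at hi
        rw [ndigit_zero,
          ndigit_eq_zero_of_lt (lt_of_lt_of_le (hu' j hj).2 (Nat.pow_le_pow_right (by omega) hi))]
      have hout : ∀ j, j ∉ u → ℓ j = (fun _ => 0) j := fun j hj => hz j hj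
      have hdig := dual_digit_eq φ C n hn t hnet u (plusOne k u) hsum' ℓ (fun _ => 0)
        hdl hdual0 hout hhigh
      obtain ⟨j, hj⟩ := hu
      have hzero : ℓ j = 0 :=
        eq_of_ndigit_eq (k j + 1) (hu' j hj).2 (pow_pos (by omega) _) (hdig j)
      have hge := (hu' j hj).1
      have hp : 0 < Fintype.card F ^ k j := pow_pos (by omega) _
      omega
    rw [hempty, Set.ncard_empty]
  · -- part 2
    intro h1 h2
    obtain ⟨v, hvu, hvcard⟩ :=
      Finset.exists_subset_card_eq (n := m - t - ∑ j ∈ u, k j) (s := u) (by omega)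
    have hps : ∑ j ∈ u, plusOne k v j = (∑ j ∈ u, k j) + v.card := by
      have hc : ∀ j ∈ u, plusOne k v j = k j + (if j ∈ v then 1 else 0) := by
        intro j _; by_cases h : j ∈ v <;> simp [plusOne, h]
      rw [Finset.sum_congr rfl hc, Finset.sum_add_distrib, Finset.sum_ite_mem,
        Finset.inter_eq_right.2 hvu, Finset.sum_const, smul_eq_mul, mul_one]
    have hsum' : (∑ j ∈ u, plusOne k v j) + t ≤ m := by omega
    have hk'' : ∀ j ∈ u, plusOne k v j ≤ k j + 1 := by
      intro j _; by_cases h : j ∈ v <;> simp [plusOne, h]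
    refine le_trans (count_bound φ C n hn t hnet u k (plusOne k v) hk'' hsum') ?_
    have hprod : (∏ j ∈ u, (if plusOne k v j ≤ k j then
        (Fintype.card F - 1) * Fintype.card F ^ (k j - plusOne k v j) else 1))
        = (Fintype.card F - 1) ^ (u.card - v.card) := by
      have hc : ∀ j ∈ u, (if plusOne k v j ≤ k j then
          (Fintype.card F - 1) * Fintype.card F ^ (k j - plusOne k v j) else 1)
          = (if j ∈ v then 1 else Fintype.card F - 1) := by
        intro j _
        by_cases h : j ∈ v
        · simp [plusOne, h]
        · simp [plusOne, h]
      rw [Finset.prod_congr rfl hc, ← Finset.prod_sdiff hvu,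
        Finset.prod_eq_one (fun j hj => if_pos hj),
        Finset.prod_congr rfl (fun j hj => if_neg (Finset.mem_sdiff.1 hj).2),
        Finset.prod_const, Finset.card_sdiff_of_subset hvu, mul_one]
    rw [hprod]
    have he : u.card - v.card = u.card + (∑ j ∈ u, k j) + t - m := by omega
    rw [he]
  · -- part 3
    intro h1
    obtain ⟨k', hk'le, hk'sum⟩ := exists_le_sum u k (m - t) (by omega)
    have hsum' : (∑ j ∈ u, k' j) + t ≤ m := by omega
    refine le_trans (count_bound φ C n hn t hnet u k k'
      (fun j _ => by have := hk'le j; omega) hsum') ?_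
    have hprod : (∏ j ∈ u, (if k' j ≤ k j then
        (Fintype.card F - 1) * Fintype.card F ^ (k j - k' j) else 1))
        = (Fintype.card F - 1) ^ u.card * Fintype.card F ^ ((∑ j ∈ u, k j) + t - m) := by
      rw [Finset.prod_congr rfl (fun j _ => if_pos (hk'le j)), Finset.prod_mul_distrib,
        Finset.prod_const, Finset.prod_pow_eq_pow_sum]
      have hadd : (∑ j ∈ u, (k j - k' j)) + ∑ j ∈ u, k' j = ∑ j ∈ u, k j := by
        rw [← Finset.sum_add_distrib]
        exact Finset.sum_congr rfl fun j _ => by have := hk'le j; omega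
      have he : ∑ j ∈ u, (k j - k' j) = (∑ j ∈ u, k j) + t - m := by omega
      rw [he]
    rw [hprod]
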